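/- Let K(p,q) = tanh(max{p²,q²}/8)/(max{p²,q²}/4) for (p,q) ≠ (0,0), and K(0,0) = 1/2. Then K is a positive definite kernel on ℝ: for every f ∈ L²(ℝ, ℂ) the double integral ∬_{ℝ×ℝ} K(p,q) f(p) \overline{f(q)} dp dq is absolutely convergent, real, and nonnegative. -/

import Mathlib

open MeasureTheory Real Filter

/-- The kernel `K(p,q) = tanh(max{p²,q²}/8)/(max{p²,q²}/4)`, with `K(0,0) = 1/2`. -/
noncomputable def Kker (p q : ℝ) : ℝ :=
  if p = 0 ∧ q = 0 then 1 / 2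
  else Real.tanh (max (p ^ 2) (q ^ 2) / 8) / (max (p ^ 2) (q ^ 2) / 4)

/-- `phi u = tanh u / u` for `u ≠ 0`, `phi 0 = 1`. -/
noncomputable def phi (u : ℝ) : ℝ := if u = 0 then 1 else Real.tanh u / u

noncomputable def hfun (p : ℝ) : ℝ := phi (p ^ 2 / 8) / 2


-- tanh facts
lemma continuous_tanh' : Continuous Real.tanh := by
  have : Real.tanh = fun x => Real.sinh x / Real.cosh x := funext fun x => Real.tanh_eq_sinh_div_cosh x
  rw [this]
  exact Real.continuous_sinh.div Real.continuous_cosh fun x => (Real.cosh_pos x).ne'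

lemma hasDerivAt_tanh' (x : ℝ) : HasDerivAt Real.tanh (1 / Real.cosh x ^ 2) x := by
  have h : HasDerivAt (fun u => Real.sinh u / Real.cosh u)
      ((Real.cosh x * Real.cosh x - Real.sinh x * Real.sinh x) / Real.cosh x ^ 2) x :=
    (Real.hasDerivAt_sinh x).div (Real.hasDerivAt_cosh x) (Real.cosh_pos x).ne'
  have e : Real.tanh = fun u => Real.sinh u / Real.cosh u :=
    funext fun u => Real.tanh_eq_sinh_div_cosh u
  have hone : Real.cosh x * Real.cosh x - Real.sinh x * Real.sinh x = 1 := by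
    have hsq := Real.cosh_sq_sub_sinh_sq x; nlinarith
  rw [e]; rw [hone] at h; exact h

lemma tanh_le_self' {x : ℝ} (hx : 0 ≤ x) : Real.tanh x ≤ x := by
  have h : Monotone (fun u => u - Real.tanh u) := by
    apply monotone_of_deriv_nonneg
    · exact differentiable_id.sub fun u => (hasDerivAt_tanh' u).differentiableAt
    · intro u
      have hd : HasDerivAt (fun u => u - Real.tanh u) (1 - 1 / Real.cosh u ^ 2) u :=
        (hasDerivAt_id u).sub (hasDerivAt_tanh' u)
      rw [hd.deriv]
      have h1 : (1:ℝ) ≤ Real.cosh u ^ 2 := by nlinarith [Real.one_le_cosh u]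
      have : 1 / Real.cosh u ^ 2 ≤ 1 := by
        rw [div_le_one (by positivity)]; exact h1
      linarith
  have := h hx
  simpa [Real.tanh_zero] using this

lemma tanh_nonneg' {x : ℝ} (hx : 0 ≤ x) : 0 ≤ Real.tanh x := by
  rw [Real.tanh_eq_sinh_div_cosh]
  exact div_nonneg (by rwa [Real.sinh_nonneg_iff]) (Real.cosh_pos x).le

lemma tanh_div_anti : AntitoneOn (fun u => Real.tanh u / u) (Set.Ioi (0:ℝ)) := by
  apply antitoneOn_of_deriv_nonpos (convex_Ioi 0)
  · exact (continuous_tanh'.continuousOn.div continuousOn_id fun x hx => ne_of_gt hx)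
  · rw [interior_Ioi]
    intro x hx
    exact ((hasDerivAt_tanh' x).div (hasDerivAt_id x) (ne_of_gt hx)).differentiableAt.differentiableWithinAt
  · rw [interior_Ioi]
    intro x hx
    have hx' : (0:ℝ) < x := hx
    have hd : HasDerivAt (fun u => Real.tanh u / u)
        ((1 / Real.cosh x ^ 2 * x - Real.tanh x * 1) / x ^ 2) x :=
      (hasDerivAt_tanh' x).div (hasDerivAt_id x) (ne_of_gt hx')
    rw [hd.deriv]
    apply div_nonpos_of_nonpos_of_nonneg _ (by positivity)
    have hc : (0:ℝ) < Real.cosh x ^ 2 := by positivity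
    rw [sub_nonpos, Real.tanh_eq_sinh_div_cosh, mul_one,
      div_mul_eq_mul_div, div_le_div_iff₀ hc (Real.cosh_pos x)]
    have h1 : x < Real.sinh x := Real.self_lt_sinh_iff.2 hx'
    have h2 : 1 ≤ Real.cosh x := Real.one_le_cosh x
    have h3 : 0 ≤ Real.sinh x := by rw [Real.sinh_nonneg_iff]; exact hx'.le
    nlinarith [mul_lt_mul_of_pos_right h1 (Real.cosh_pos x),
      mul_nonneg h3 (mul_nonneg (sub_nonneg.2 h2) (Real.cosh_pos x).le)]



/-- `phi u = tanh u / u` for `u ≠ 0`, `phi 0 = 1`. -/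



lemma tanh_lt_one' (x : ℝ) : Real.tanh x < 1 := by
  rw [Real.tanh_eq_sinh_div_cosh, div_lt_one (Real.cosh_pos x)]
  exact Real.sinh_lt_cosh x

lemma phi_le_one {u : ℝ} (hu : 0 ≤ u) : phi u ≤ 1 := by
  unfold phi
  split_ifs with h
  · exact le_refl 1
  · rw [div_le_one (lt_of_le_of_ne hu (Ne.symm h))]
    exact tanh_le_self' hu

lemma phi_pos {u : ℝ} (hu : 0 ≤ u) : 0 < phi u := by
  unfold phi
  split_ifs with h
  · norm_num
  · have hu' : 0 < u := lt_of_le_of_ne hu (Ne.symm h)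
    have : 0 < Real.tanh u := by
      rw [Real.tanh_eq_sinh_div_cosh]
      exact div_pos (by rwa [Real.sinh_pos_iff]) (Real.cosh_pos u)
    exact div_pos this hu'

lemma phi_anti {a b : ℝ} (ha : 0 ≤ a) (hab : a ≤ b) : phi b ≤ phi a := by
  rcases eq_or_lt_of_le ha with h0 | ha'
  · have : phi a = 1 := by rw [← h0]; simp [phi]
    rw [this]
    exact phi_le_one (ha.trans hab)
  · have hb' : 0 < b := lt_of_lt_of_le ha' hab
    unfold phi
    rw [if_neg (ne_of_gt ha'), if_neg (ne_of_gt hb')]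
    exact tanh_div_anti ha' hb' hab

lemma hfun_pos (p : ℝ) : 0 < hfun p := by
  have := phi_pos (by positivity : (0:ℝ) ≤ p ^ 2 / 8)
  unfold hfun; linarith

lemma hfun_le_half (p : ℝ) : hfun p ≤ 1 / 2 := by
  have := phi_le_one (by positivity : (0:ℝ) ≤ p ^ 2 / 8)
  unfold hfun; linarith

lemma hfun_anti {p q : ℝ} (h : p ^ 2 ≤ q ^ 2) : hfun q ≤ hfun p := by
  unfold hfun
  have := phi_anti (by positivity : (0:ℝ) ≤ p ^ 2 / 8) (by linarith : p ^ 2 / 8 ≤ q ^ 2 / 8)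
  linarith

lemma Kker_eq_phi (p q : ℝ) : Kker p q = phi (max (p ^ 2) (q ^ 2) / 8) / 2 := by
  unfold Kker phi
  by_cases h : p = 0 ∧ q = 0
  · rw [if_pos h, h.1, h.2]
    norm_num
  · have hm : 0 < max (p ^ 2) (q ^ 2) := by
      rcases (not_and_or.1 h) with hp | hq
      · exact lt_max_of_lt_left (by positivity)
      · exact lt_max_of_lt_right (by positivity)
    rw [if_neg h, if_neg (by positivity : (max (p ^ 2) (q ^ 2)) / 8 ≠ 0)]
    field_simp
    ring

lemma Kker_eq_min (p q : ℝ) : Kker p q = min (hfun p) (hfun q) := by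
  rw [Kker_eq_phi]
  rcases le_total (p ^ 2) (q ^ 2) with h | h
  · rw [max_eq_right h, min_eq_right (hfun_anti h)]
    rfl
  · rw [max_eq_left h, min_eq_left (hfun_anti h)]
    rfl





lemma hfun_measurable : Measurable hfun := by
  have h1 : Measurable fun u : ℝ => phi u := by
    unfold phi
    exact Measurable.ite (measurableSet_eq) measurable_const
      (continuous_tanh'.measurable.div measurable_id)
  exact (h1.comp ((measurable_id.pow_const 2).div_const 8)).div_const 2

lemma hfun_le_bound (p : ℝ) : hfun p ≤ 8 * (1 + p ^ 2)⁻¹ := by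
  have hp2 : (0:ℝ) < 1 + p ^ 2 := by positivity
  rcases le_total (p ^ 2) 1 with h | h
  · have : (1:ℝ) + p ^ 2 ≤ 2 := by linarith
    have h2 : (1:ℝ) / 2 ≤ 8 * (1 + p ^ 2)⁻¹ := by
      rw [le_mul_inv_iff₀ hp2]; linarith
    exact (hfun_le_half p).trans h2
  · have hp0 : p ≠ 0 := by intro h0; rw [h0] at h; norm_num at h
    have hu : p ^ 2 / 8 ≠ 0 := by positivity
    have : hfun p = Real.tanh (p ^ 2 / 8) / (p ^ 2 / 8) / 2 := by
      unfold hfun phi; rw [if_neg hu]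
    rw [this]
    have ht : Real.tanh (p ^ 2 / 8) ≤ 1 := (tanh_lt_one' _).le
    have hu' : (0:ℝ) < p ^ 2 / 8 := by positivity
    have : Real.tanh (p ^ 2 / 8) / (p ^ 2 / 8) ≤ 8 / p ^ 2 := by
      rw [div_le_div_iff₀ hu' (by positivity)]
      calc Real.tanh (p ^ 2 / 8) * p ^ 2 ≤ 1 * p ^ 2 := by nlinarith [sq_nonneg p]
        _ = 8 * (p ^ 2 / 8) := by ring
    calc Real.tanh (p ^ 2 / 8) / (p ^ 2 / 8) / 2 ≤ 8 / p ^ 2 / 2 := by linarith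
      _ = 4 / p ^ 2 := by ring
      _ ≤ 8 * (1 + p ^ 2)⁻¹ := by
          rw [le_mul_inv_iff₀ hp2, div_mul_eq_mul_div,
            div_le_iff₀ (by positivity : (0:ℝ) < p ^ 2)]
          nlinarith
lemma integrable_hfun : Integrable hfun := by
  apply Integrable.mono' ((integrable_inv_one_add_sq).const_mul 8)
    hfun_measurable.aestronglyMeasurable
  filter_upwards with p
  rw [Real.norm_eq_abs, abs_of_pos (hfun_pos p)]
  exact hfun_le_bound p

lemma min_le_sqrt_mul_sqrt {a b : ℝ} (ha : 0 ≤ a) (hb : 0 ≤ b) :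
    min a b ≤ Real.sqrt a * Real.sqrt b := by
  rcases le_total a b with h | h
  · rw [min_eq_left h]
    calc a = Real.sqrt a * Real.sqrt a := (Real.mul_self_sqrt ha).symm
      _ ≤ Real.sqrt a * Real.sqrt b := by
        exact mul_le_mul_of_nonneg_left (Real.sqrt_le_sqrt h) (Real.sqrt_nonneg a)
  · rw [min_eq_right h]
    calc b = Real.sqrt b * Real.sqrt b := (Real.mul_self_sqrt hb).symm
      _ ≤ Real.sqrt a * Real.sqrt b := by
        exact mul_le_mul_of_nonneg_right (Real.sqrt_le_sqrt h) (Real.sqrt_nonneg b)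





noncomputable def Efn (t p : ℝ) : ℝ := (Set.Iic (hfun p)).indicator (1 : ℝ → ℝ) t

lemma Efn_eq (t p : ℝ) : Efn t p = if t ≤ hfun p then 1 else 0 := by
  simp [Efn, Set.indicator_apply]

lemma Efn_mul (t p q : ℝ) :
    Efn t p * Efn t q
      = (Set.Iic (min (hfun p) (hfun q))).indicator (1 : ℝ → ℝ) t := by
  rw [Efn_eq, Efn_eq, Set.indicator_apply]
  simp only [Set.mem_Iic, le_min_iff]
  by_cases h1 : t ≤ hfun p <;> by_cases h2 : t ≤ hfun q <;> simp [h1, h2]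

noncomputable abbrev nu : Measure ℝ := volume.restrict (Set.Ioc (0:ℝ) (1/2))

lemma nu_Iic {m : ℝ} (hm : 0 < m) (hm2 : m ≤ 1 / 2) :
    nu (Set.Iic m) = ENNReal.ofReal m := by
  rw [Measure.restrict_apply measurableSet_Iic]
  have : Set.Iic m ∩ Set.Ioc (0:ℝ) (1/2) = Set.Ioc 0 m := by
    ext t
    simp only [Set.mem_inter_iff, Set.mem_Iic, Set.mem_Ioc]
    constructor
    · rintro ⟨h1, h2, h3⟩; exact ⟨h2, h1⟩
    · rintro ⟨h1, h2⟩; exact ⟨h2, h1, h2.trans hm2⟩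
  rw [this, Real.volume_Ioc, sub_zero]

lemma nu_Iic_lt_top (m : ℝ) : nu (Set.Iic m) < ⊤ := by
  rw [Measure.restrict_apply measurableSet_Iic]
  calc volume (Set.Iic m ∩ Set.Ioc (0:ℝ) (1/2)) ≤ volume (Set.Ioc (0:ℝ) (1/2)) :=
        measure_mono Set.inter_subset_right
    _ < ⊤ := by rw [Real.volume_Ioc]; exact ENNReal.ofReal_lt_top

lemma keyEE (p q : ℝ) : ∫ t, Efn t p * Efn t q ∂nu = min (hfun p) (hfun q) := by
  have hm : 0 < min (hfun p) (hfun q) := lt_min (hfun_pos p) (hfun_pos q)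
  have hm2 : min (hfun p) (hfun q) ≤ 1 / 2 := (min_le_left _ _).trans (hfun_le_half p)
  simp only [Efn_mul]
  rw [integral_indicator_one measurableSet_Iic, measureReal_def, nu_Iic hm hm2,
    ENNReal.toReal_ofReal hm.le]

theorem Kker_posdef (f : Lp ℂ 2 (volume : Measure ℝ)) :
    Integrable (fun x : ℝ × ℝ =>
        (Kker x.1 x.2 : ℂ) * f x.1 * (starRingEnd ℂ) (f x.2)) (volume : Measure (ℝ × ℝ)) ∧
    (∫ x : ℝ × ℝ, (Kker x.1 x.2 : ℂ) * f x.1 * (starRingEnd ℂ) (f x.2)).im = 0 ∧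
    0 ≤ (∫ x : ℝ × ℝ, (Kker x.1 x.2 : ℂ) * f x.1 * (starRingEnd ℂ) (f x.2)).re := by
  classical
  set F : ℝ → ℂ := ⇑f with hFdef
  have hF : AEStronglyMeasurable F volume := Lp.aestronglyMeasurable f
  have hF2 : MemLp F 2 volume := Lp.memLp f
  -- the L¹ majorant u
  set u : ℝ → ℝ := fun p => Real.sqrt (hfun p) * ‖F p‖ with hudef
  have hsqrtm : Measurable fun p => Real.sqrt (hfun p) :=
    Real.continuous_sqrt.measurable.comp hfun_measurable
  have hsqrt2 : MemLp (fun p => Real.sqrt (hfun p)) 2 volume := by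
    rw [memLp_two_iff_integrable_sq hsqrtm.aestronglyMeasurable]
    apply integrable_hfun.congr
    filter_upwards with p
    rw [Real.sq_sqrt (hfun_pos p).le]
  have hu : Integrable u volume := by
    rw [← memLp_one_iff_integrable]
    have := MemLp.smul (p := 2) (q := 2) (r := 1) (hF2.norm) hsqrt2
      (hpqr := ⟨by simp only [inv_one, ENNReal.inv_two_add_inv_two]⟩)
    exact this
  -- the pointwise majorant
  have hKw : ∀ z : ℝ × ℝ, min (hfun z.1) (hfun z.2) * (‖F z.1‖ * ‖F z.2‖) ≤ u z.1 * u z.2 := by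
    intro z
    have h1 : min (hfun z.1) (hfun z.2) ≤ Real.sqrt (hfun z.1) * Real.sqrt (hfun z.2) :=
      min_le_sqrt_mul_sqrt (hfun_pos _).le (hfun_pos _).le
    have : min (hfun z.1) (hfun z.2) * (‖F z.1‖ * ‖F z.2‖)
        ≤ Real.sqrt (hfun z.1) * Real.sqrt (hfun z.2) * (‖F z.1‖ * ‖F z.2‖) :=
      mul_le_mul_of_nonneg_right h1 (by positivity)
    calc min (hfun z.1) (hfun z.2) * (‖F z.1‖ * ‖F z.2‖)
        ≤ Real.sqrt (hfun z.1) * Real.sqrt (hfun z.2) * (‖F z.1‖ * ‖F z.2‖) := this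
      _ = u z.1 * u z.2 := by simp [hudef]; ring
  have hw_meas : AEStronglyMeasurable
      (fun z : ℝ × ℝ => min (hfun z.1) (hfun z.2) * (‖F z.1‖ * ‖F z.2‖))
      ((volume : Measure ℝ).prod volume) := by
    refine AEStronglyMeasurable.mul ?_ (hF.comp_fst.norm.mul hF.comp_snd.norm)
    exact ((hfun_measurable.comp measurable_fst).min
      (hfun_measurable.comp measurable_snd)).aestronglyMeasurable
  have hw : Integrable
      (fun z : ℝ × ℝ => min (hfun z.1) (hfun z.2) * (‖F z.1‖ * ‖F z.2‖))
      ((volume : Measure ℝ).prod volume) := by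
    refine (hu.mul_prod hu).mono' hw_meas ?_
    filter_upwards with z
    rw [Real.norm_eq_abs, abs_of_nonneg (mul_nonneg
      (le_min (hfun_pos _).le (hfun_pos _).le) (by positivity))]
    exact hKw z
  -- measurability of Kker
  have hKm : Measurable fun z : ℝ × ℝ => Kker z.1 z.2 := by
    have : (fun z : ℝ × ℝ => Kker z.1 z.2)
        = fun z : ℝ × ℝ => min (hfun z.1) (hfun z.2) := funext fun z => Kker_eq_min z.1 z.2
    rw [this]
    exact (hfun_measurable.comp measurable_fst).min (hfun_measurable.comp measurable_snd)
  -- part 1 : integrability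
  have hconjF : AEStronglyMeasurable (fun z : ℝ × ℝ => (starRingEnd ℂ) (F z.2))
      ((volume : Measure ℝ).prod volume) := (Complex.continuous_conj.comp_aestronglyMeasurable hF.comp_snd)
  have hG_meas : AEStronglyMeasurable
      (fun z : ℝ × ℝ => (Kker z.1 z.2 : ℂ) * F z.1 * (starRingEnd ℂ) (F z.2))
      ((volume : Measure ℝ).prod volume) :=
    (((Complex.measurable_ofReal.comp hKm).aestronglyMeasurable.mul hF.comp_fst).mul hconjF)
  have hGnorm : ∀ z : ℝ × ℝ, ‖(Kker z.1 z.2 : ℂ) * F z.1 * (starRingEnd ℂ) (F z.2)‖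
      = min (hfun z.1) (hfun z.2) * (‖F z.1‖ * ‖F z.2‖) := by
    intro z
    rw [norm_mul, norm_mul, Complex.norm_real, Real.norm_eq_abs, RCLike.norm_conj,
      Kker_eq_min, abs_of_nonneg (le_min (hfun_pos _).le (hfun_pos _).le :
        (0:ℝ) ≤ min (hfun z.1) (hfun z.2)), mul_assoc]
  have hGint : Integrable
      (fun z : ℝ × ℝ => (Kker z.1 z.2 : ℂ) * F z.1 * (starRingEnd ℂ) (F z.2))
      ((volume : Measure ℝ).prod volume) := by
    refine hw.mono' hG_meas ?_
    filter_upwards with z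
    rw [hGnorm z]
  refine ⟨by rw [Measure.volume_eq_prod]; exact hGint, ?_⟩
  -- the triple-integral function
  set Φ : (ℝ × ℝ) → ℝ → ℂ := fun z t =>
    ((Efn t z.1 * Efn t z.2 : ℝ) : ℂ) * (F z.1 * (starRingEnd ℂ) (F z.2)) with hPhidef
  have hE1 : Measurable fun w : (ℝ × ℝ) × ℝ => Efn w.2 w.1.1 := by
    simp only [Efn_eq]
    exact Measurable.ite (measurableSet_le measurable_snd
      (hfun_measurable.comp (measurable_fst.comp measurable_fst)))
      measurable_const measurable_const
  have hE2 : Measurable fun w : (ℝ × ℝ) × ℝ => Efn w.2 w.1.2 := by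
    simp only [Efn_eq]
    exact Measurable.ite (measurableSet_le measurable_snd
      (hfun_measurable.comp (measurable_snd.comp measurable_fst)))
      measurable_const measurable_const
  have hPhiMeas : AEStronglyMeasurable (Function.uncurry Φ)
      (((volume : Measure ℝ).prod volume).prod nu) := by
    have h1 : AEStronglyMeasurable (fun w : (ℝ × ℝ) × ℝ => F w.1.1)
        (((volume : Measure ℝ).prod volume).prod nu) := hF.comp_fst.comp_fst
    have h2 : AEStronglyMeasurable (fun w : (ℝ × ℝ) × ℝ => (starRingEnd ℂ) (F w.1.2))
        (((volume : Measure ℝ).prod volume).prod nu) :=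
      Complex.continuous_conj.comp_aestronglyMeasurable hF.comp_snd.comp_fst
    exact ((Complex.measurable_ofReal.comp (hE1.mul hE2)).aestronglyMeasurable.mul (h1.mul h2))
  have hPhiEq : ∀ z : ℝ × ℝ, (fun t => Φ z t)
      = (Set.Iic (min (hfun z.1) (hfun z.2))).indicator
          (fun _ => F z.1 * (starRingEnd ℂ) (F z.2)) := by
    intro z
    funext t
    simp only [hPhidef, Efn_mul]
    rw [Set.indicator_apply, Set.indicator_apply]
    split_ifs <;> simp
  have hsec : ∀ z : ℝ × ℝ, Integrable (fun t => Φ z t) nu := by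
    intro z
    rw [hPhiEq z, integrable_indicator_iff measurableSet_Iic]
    exact integrableOn_const (nu_Iic_lt_top _).ne
  have hnormint : (fun z : ℝ × ℝ => ∫ t, ‖Φ z t‖ ∂nu)
      = fun z : ℝ × ℝ => min (hfun z.1) (hfun z.2) * (‖F z.1‖ * ‖F z.2‖) := by
    funext z
    have hm : 0 < min (hfun z.1) (hfun z.2) := lt_min (hfun_pos _) (hfun_pos _)
    have hm2 : min (hfun z.1) (hfun z.2) ≤ 1 / 2 :=
      (min_le_left _ _).trans (hfun_le_half _)
    have h1 : (fun t => ‖Φ z t‖)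
        = (Set.Iic (min (hfun z.1) (hfun z.2))).indicator
            (fun _ => ‖F z.1 * (starRingEnd ℂ) (F z.2)‖) := by
      funext t
      rw [show Φ z t = _ from congrFun (hPhiEq z) t]
      exact norm_indicator_eq_indicator_norm _ t
    rw [h1, integral_indicator_const _ measurableSet_Iic, measureReal_def, nu_Iic hm hm2,
      ENNReal.toReal_ofReal hm.le, smul_eq_mul, norm_mul, RCLike.norm_conj]
  have hPhiInt : Integrable (Function.uncurry Φ)
      (((volume : Measure ℝ).prod volume).prod nu) := by
    rw [integrable_prod_iff hPhiMeas]
    refine ⟨Filter.Eventually.of_forall hsec, ?_⟩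
    have h4 : (fun z : ℝ × ℝ => ∫ t, ‖Function.uncurry Φ (z, t)‖ ∂nu)
        = fun z : ℝ × ℝ => min (hfun z.1) (hfun z.2) * (‖F z.1‖ * ‖F z.2‖) := hnormint
    rw [h4]; exact hw
  have step1 : ∀ z : ℝ × ℝ, (Kker z.1 z.2 : ℂ) * F z.1 * (starRingEnd ℂ) (F z.2)
      = ∫ t, Φ z t ∂nu := by
    intro z
    have : ∫ t, Φ z t ∂nu
        = (∫ t, ((Efn t z.1 * Efn t z.2 : ℝ) : ℂ) ∂nu) * (F z.1 * (starRingEnd ℂ) (F z.2)) :=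
      integral_mul_const _ _
    have h5 : ∫ t, ((Efn t z.1 * Efn t z.2 : ℝ) : ℂ) ∂nu
        = ((∫ t, Efn t z.1 * Efn t z.2 ∂nu : ℝ) : ℂ) := integral_ofReal
    rw [this, h5, keyEE, ← Kker_eq_min, mul_assoc]
  have inner : ∀ t : ℝ, ∫ z, Φ z t ∂((volume : Measure ℝ).prod volume)
      = ((Complex.normSq (∫ p, ((Efn t p : ℝ) : ℂ) * F p ∂volume) : ℝ) : ℂ) := by
    intro t
    have h1 : ∀ z : ℝ × ℝ, Φ z t
        = (((Efn t z.1 : ℝ) : ℂ) * F z.1) * (((Efn t z.2 : ℝ) : ℂ) * (starRingEnd ℂ) (F z.2)) := by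
      intro z; simp only [hPhidef]; push_cast; ring
    have h2 : ∫ z, Φ z t ∂((volume : Measure ℝ).prod volume)
        = (∫ p, ((Efn t p : ℝ) : ℂ) * F p ∂volume)
          * (∫ q, ((Efn t q : ℝ) : ℂ) * (starRingEnd ℂ) (F q) ∂volume) := by
      rw [show (fun z : ℝ × ℝ => Φ z t) = fun z : ℝ × ℝ =>
        (((Efn t z.1 : ℝ) : ℂ) * F z.1) * (((Efn t z.2 : ℝ) : ℂ) * (starRingEnd ℂ) (F z.2))
        from funext h1]
      exact integral_prod_mul (fun p => ((Efn t p : ℝ) : ℂ) * F p)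
        (fun q => ((Efn t q : ℝ) : ℂ) * (starRingEnd ℂ) (F q))
    have h3 : (∫ q, ((Efn t q : ℝ) : ℂ) * (starRingEnd ℂ) (F q) ∂volume)
        = (starRingEnd ℂ) (∫ p, ((Efn t p : ℝ) : ℂ) * F p ∂volume) := by
      rw [← integral_conj]
      congr 1
      funext q
      rw [map_mul, Complex.conj_ofReal]
    rw [h2, h3, Complex.mul_conj]
  have main : ∫ z, (Kker z.1 z.2 : ℂ) * F z.1 * (starRingEnd ℂ) (F z.2)
        ∂((volume : Measure ℝ).prod volume)
      = ((∫ t, Complex.normSq (∫ p, ((Efn t p : ℝ) : ℂ) * F p ∂volume) ∂nu : ℝ) : ℂ) := by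
    calc ∫ z, (Kker z.1 z.2 : ℂ) * F z.1 * (starRingEnd ℂ) (F z.2)
          ∂((volume : Measure ℝ).prod volume)
        = ∫ z, ∫ t, Φ z t ∂nu ∂((volume : Measure ℝ).prod volume) := by
          exact integral_congr_ae (Filter.Eventually.of_forall step1)
      _ = ∫ t, ∫ z, Φ z t ∂((volume : Measure ℝ).prod volume) ∂nu :=
          integral_integral_swap hPhiInt
      _ = ∫ t, ((Complex.normSq (∫ p, ((Efn t p : ℝ) : ℂ) * F p ∂volume) : ℝ) : ℂ) ∂nu :=
          integral_congr_ae (Filter.Eventually.of_forall inner)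
      _ = _ := integral_ofReal
  rw [Measure.volume_eq_prod, main]
  exact ⟨Complex.ofReal_im _, by
    rw [Complex.ofReal_re]
    exact integral_nonneg fun t => Complex.normSq_nonneg _⟩
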